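/- Let k be an integer with 0 ≤ k ≤ m-1, and define a = (γ^(2m+3k+2) + γ^(m+6k+4) + 1)/(3γ^(m+3k+2)), b = (γ^(2m) + γ^(m+6k+4) + γ^(3k+2))/(3γ^(m+3k+2)), c = (γ^(6k+4) + γ^(3k+2) + 1)/(3γ^(3k+2)) in F_q, and let g(x) = a·x^(2m+1) + b·x^(m+1) + c·x. Then for every integer i with 0 ≤ i ≤ m-1 one has g(γ^(3i+1)) = γ^(3i+1). -/

import Mathlib

theorem stmt5_key (ω t : F) [Field F] (hω0 : ω ≠ 0) (ht0 : t ≠ 0) (h3 : (3:F) ≠ 0)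
    (hω : ω^2 + ω + 1 = 0) :
    ((ω^2*t + ω*t^2 + 1)/(3*(ω*t)))*ω^2 + ((ω^2 + ω*t^2 + t)/(3*(ω*t)))*ω
      + ((t^2 + t + 1)/(3*t)) = 1 := by
  field_simp
  linear_combination (ω*t + 1 + t^2 - t) * hω

theorem stmt5 (q m : ℕ) (F : Type*) [Field F] [Fintype F]
    (hq : Fintype.card F = q) (hodd : Odd q) (hq3 : q % 3 = 1)
    (hm : m = (q - 1) / 3)
    (γ : Fˣ) (hγ : ∀ x : Fˣ, x ∈ Subgroup.zpowers γ)
    (k : ℕ) (hk : k ≤ m - 1)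
    (a b c : F)
    (ha : a = ((γ : F)^(2*m+3*k+2) + (γ : F)^(m+6*k+4) + 1) / (3 * (γ : F)^(m+3*k+2)))
    (hb : b = ((γ : F)^(2*m) + (γ : F)^(m+6*k+4) + (γ : F)^(3*k+2)) / (3 * (γ : F)^(m+3*k+2)))
    (hc : c = ((γ : F)^(6*k+4) + (γ : F)^(3*k+2) + 1) / (3 * (γ : F)^(3*k+2)))
    (g : F → F)
    (hg : ∀ x : F, g x = a * x^(2*m+1) + b * x^(m+1) + c * x) :
    ∀ i : ℕ, i ≤ m - 1 → g ((γ : F)^(3*i+1)) = (γ : F)^(3*i+1) := by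
  intro i hi
  have hG0 : (γ : F) ≠ 0 := Units.ne_zero γ
  have hq2 : 2 ≤ q := by rw [← hq]; exact Fintype.one_lt_card
  have hq2' : q % 2 = 1 := Nat.odd_iff.mp hodd
  have hq7 : 7 ≤ q := by omega
  have h3m : 3 * m = q - 1 := by omega
  have hG1 : (γ : F) ^ (q - 1) = 1 := by
    have := FiniteField.pow_card_sub_one_eq_one (γ : F) hG0
    rwa [hq] at this
  have hord : orderOf γ = q - 1 := by
    rw [orderOf_eq_card_of_forall_mem_zpowers hγ, Nat.card_units, Nat.card_eq_fintype_card, hq]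
  obtain ⟨ω, hωdef⟩ : ∃ w : F, w = (γ : F) ^ m := ⟨_, rfl⟩
  obtain ⟨t, htdef⟩ : ∃ w : F, w = (γ : F) ^ (3*k+2) := ⟨_, rfl⟩
  obtain ⟨x, hxdef⟩ : ∃ w : F, w = (γ : F) ^ (3*i+1) := ⟨_, rfl⟩
  have hωne : ω ≠ 1 := by
    intro h
    have hu : γ ^ m = 1 := by
      ext
      push_cast
      rw [← hωdef, h]
    have hdvd := orderOf_dvd_of_pow_eq_one hu
    rw [hord] at hdvd
    have hmpos : 0 < m := by omega
    have := Nat.le_of_dvd hmpos hdvd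
    omega
  have hω3 : ω ^ 3 = 1 := by
    rw [hωdef, ← pow_mul, Nat.mul_comm, h3m, hG1]
  have hω : ω ^ 2 + ω + 1 = 0 := by
    have h : (ω - 1) * (ω ^ 2 + ω + 1) = 0 := by linear_combination hω3
    rcases mul_eq_zero.mp h with h' | h'
    · exact absurd (by linear_combination h') hωne
    · exact h'
  have h3 : (3 : F) ≠ 0 := by
    intro h
    apply hωne
    have hsq : (ω - 1) ^ 2 = 0 := by linear_combination hω - ω * h
    have := pow_eq_zero_iff (n := 2) (by norm_num) |>.mp hsq
    linear_combination this
  have hω0 : ω ≠ 0 := by rw [hωdef]; exact pow_ne_zero _ hG0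
  have ht0 : t ≠ 0 := by rw [htdef]; exact pow_ne_zero _ hG0
  have e1 : (γ : F) ^ (2*m+3*k+2) = ω ^ 2 * t := by rw [hωdef, htdef]; ring
  have e2 : (γ : F) ^ (m+6*k+4) = ω * t ^ 2 := by rw [hωdef, htdef]; ring
  have e3 : (γ : F) ^ (2*m) = ω ^ 2 := by rw [hωdef]; ring
  have e4 : (γ : F) ^ (m+3*k+2) = ω * t := by rw [hωdef, htdef]; ring
  have e5 : (γ : F) ^ (6*k+4) = t ^ 2 := by rw [htdef]; ring
  have hxm : x ^ m = ω := by
    have h1 : x ^ m = ((γ : F) ^ (3*m)) ^ i * (γ : F) ^ m := by rw [hxdef]; ring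
    rw [h1, h3m, hG1, one_pow, one_mul, hωdef]
  rw [e1, e2, e4] at ha
  rw [e3, e2, e4, ← htdef] at hb
  rw [e5, ← htdef] at hc
  have key := stmt5_key (F := F) ω t hω0 ht0 h3 hω
  rw [← ha, ← hb, ← hc] at key
  have hx1 : x ^ (2*m+1) = (x ^ m) ^ 2 * x := by ring
  have hx2 : x ^ (m+1) = x ^ m * x := by ring
  rw [← hxdef, hg, hx1, hx2, hxm]
  linear_combination x * key
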